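/- If η ~ Exp(1) and ξ ~ Min-U-Exp(a,λ) are independent, then τ = η/ξ has CDF F(t) = t/(λ+t) - (t/(a(λ+t)²))·(1 - e^{-a(λ+t)}) for t > 0; i.e., η/ξ ~ Exp-Min-U-Exp(a,λ). -/

import Mathlib

open MeasureTheory ProbabilityTheory Real Set

/-- The density of the Min-U-Exp(a, λ) distribution. -/
noncomputable def minUExpPDF (a lam x : ℝ) : ℝ :=
  if x ∈ Set.Ioo (0 : ℝ) a then Real.exp (-lam * x) / a * (lam * a + 1 - lam * x) else 0

theorem expMinUExp_ratio_rep {Ω : Type*} [MeasureSpace Ω] [IsProbabilityMeasure (ℙ : Measure Ω)]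
    (a lam : ℝ) (ha : 0 < a) (hlam : 0 < lam)
    (η ξ : Ω → ℝ) (hηm : Measurable η) (hξm : Measurable ξ)
    (hη : ∀ t : ℝ, 0 ≤ t → ℙ {ω | η ω ≤ t} = ENNReal.ofReal (1 - Real.exp (-t)))
    (hηpos : ∀ᵐ ω ∂ℙ, 0 < η ω)
    (hξ : Measure.map ξ ℙ = volume.withDensity (fun x => ENNReal.ofReal (minUExpPDF a lam x)))
    (hindep : IndepFun η ξ ℙ) :
    ∀ t : ℝ, 0 < t →
      ℙ {ω | η ω / ξ ω ≤ t}
        = ENNReal.ofReal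
            (t / (lam + t) - t / (a * (lam + t) ^ 2) * (1 - Real.exp (-a * (lam + t)))) := by
  intro t ht
  have ha' : a ≠ 0 := ha.ne'
  set mu : ℝ := lam + t with hmu
  have hmu0 : (0 : ℝ) < mu := by positivity
  -- pdf nonneg
  have hpdfm : Measurable fun x => ENNReal.ofReal (minUExpPDF a lam x) := by
    apply Measurable.ennreal_ofReal
    unfold minUExpPDF
    exact Measurable.ite measurableSet_Ioo (by fun_prop) measurable_const
  -- ξ ∈ Ioo 0 a a.s.
  have hξIoo : ∀ᵐ ω ∂ℙ, ξ ω ∈ Ioo 0 a := by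
    rw [ae_iff]
    have hset : {ω | ¬ ξ ω ∈ Ioo 0 a} = ξ ⁻¹' (Ioo 0 a)ᶜ := rfl
    rw [hset, ← Measure.map_apply hξm measurableSet_Ioo.compl, hξ,
      withDensity_apply _ measurableSet_Ioo.compl]
    rw [setLIntegral_congr_fun measurableSet_Ioo.compl
      ((fun x hx => show ENNReal.ofReal (minUExpPDF a lam x) = (fun _ => (0:ENNReal)) x by
        simp only [minUExpPDF, if_neg hx]; simp))]
    simp
  -- CDF of η for all reals
  have hηC : ∀ s : ℝ, ℙ {ω | η ω ≤ s} = ENNReal.ofReal (1 - Real.exp (-s)) := by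
    intro s
    rcases le_or_gt 0 s with h | h
    · exact hη s h
    · have h0 : ℙ {ω | η ω ≤ s} ≤ ℙ {ω | η ω ≤ (0:ℝ)} :=
        measure_mono fun ω hω => le_trans hω h.le
      rw [hη 0 le_rfl] at h0
      simp only [neg_zero, Real.exp_zero, sub_self, ENNReal.ofReal_zero,
        nonpos_iff_eq_zero] at h0
      rw [h0]
      symm
      rw [ENNReal.ofReal_eq_zero]
      have : (1:ℝ) < Real.exp (-s) := by
        rw [← Real.exp_zero]
        exact Real.exp_lt_exp.mpr (by linarith)
      linarith
  -- replace the event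
  have hstep1 : ℙ {ω | η ω / ξ ω ≤ t} = ℙ {ω | η ω ≤ t * ξ ω} := by
    apply measure_congr
    rw [Filter.eventuallyEq_set]
    filter_upwards [hξIoo] with ω hω
    show η ω / ξ ω ≤ t ↔ η ω ≤ t * ξ ω
    rw [div_le_iff₀ hω.1, mul_comm]
  have hsmeas : MeasurableSet {p : ℝ × ℝ | p.2 ≤ t * p.1} :=
    measurableSet_le measurable_snd (measurable_const.mul measurable_fst)
  have hstep2 : ℙ {ω | η ω ≤ t * ξ ω}
      = ((Measure.map ξ ℙ).prod (Measure.map η ℙ)) {p : ℝ × ℝ | p.2 ≤ t * p.1} := by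
    rw [← (indepFun_iff_map_prod_eq_prod_map_map hξm.aemeasurable hηm.aemeasurable).mp
      hindep.symm, Measure.map_apply (hξm.prodMk hηm) hsmeas]
    rfl
  have hstep3 : ((Measure.map ξ ℙ).prod (Measure.map η ℙ)) {p : ℝ × ℝ | p.2 ≤ t * p.1}
      = ∫⁻ x, ENNReal.ofReal (1 - Real.exp (-(t * x))) ∂(Measure.map ξ ℙ) := by
    rw [Measure.prod_apply hsmeas]
    congr 1
    funext x
    have hpre : (Prod.mk x ⁻¹' {p : ℝ × ℝ | p.2 ≤ t * p.1}) = Iic (t * x) := rfl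
    rw [hpre, Measure.map_apply hηm measurableSet_Iic]
    exact hηC (t * x)
  have hgm : Measurable fun x : ℝ => ENNReal.ofReal (1 - Real.exp (-(t * x))) := by
    fun_prop
  have hstep4 : ∫⁻ x, ENNReal.ofReal (1 - Real.exp (-(t * x))) ∂(Measure.map ξ ℙ)
      = ∫⁻ x, ENNReal.ofReal (minUExpPDF a lam x)
          * ENNReal.ofReal (1 - Real.exp (-(t * x))) ∂volume := by
    rw [hξ, lintegral_withDensity_eq_lintegral_mul _ hpdfm hgm]
    rfl
  -- the real integrand on (0, a)
  set g : ℝ → ℝ := fun x =>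
    Real.exp (-lam * x) / a * (lam * a + 1 - lam * x) * (1 - Real.exp (-(t * x))) with hg
  have hgcont : Continuous g := by fun_prop
  have hstep5 : ∫⁻ x, ENNReal.ofReal (minUExpPDF a lam x)
        * ENNReal.ofReal (1 - Real.exp (-(t * x))) ∂volume
      = ∫⁻ x in Ioo 0 a, ENNReal.ofReal (g x) ∂volume := by
    rw [← lintegral_indicator measurableSet_Ioo]
    congr 1
    funext x
    by_cases hx : x ∈ Ioo (0:ℝ) a
    · rw [indicator_of_mem hx]
      simp only [minUExpPDF, if_pos hx, hg]
      rw [← ENNReal.ofReal_mul]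
      have h1 : 0 ≤ lam * a + 1 - lam * x := by nlinarith [hx.1, hx.2]
      positivity
    · rw [indicator_of_notMem hx]
      simp only [minUExpPDF, if_neg hx]
      simp
  have hgnn : ∀ x ∈ Ioo (0:ℝ) a, 0 ≤ g x := by
    intro x hx
    have h1 : 0 ≤ lam * a + 1 - lam * x := by nlinarith [hx.1, hx.2]
    have h2 : 0 ≤ 1 - Real.exp (-(t * x)) := by
      have : Real.exp (-(t * x)) ≤ 1 := by
        rw [Real.exp_le_one_iff]
        nlinarith [hx.1]
      linarith
    have h3 : (0:ℝ) ≤ Real.exp (-lam * x) / a := by positivity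
    simp only [hg]
    positivity
  have hstep6 : ∫⁻ x in Ioo 0 a, ENNReal.ofReal (g x) ∂volume
      = ENNReal.ofReal (∫ x in Ioo 0 a, g x) := by
    rw [← ofReal_integral_eq_lintegral_ofReal]
    · exact (hgcont.integrableOn_Icc).mono_set Ioo_subset_Icc_self
    · filter_upwards [ae_restrict_mem measurableSet_Ioo] with x hx using hgnn x hx
  -- compute the integral
  set A : ℝ := lam * a + 1 with hA
  set F : ℝ → ℝ := fun x =>
    (Real.exp (-(lam * x)) * (lam * x / lam + lam / lam ^ 2 - A / lam)
      - Real.exp (-(mu * x)) * (lam * x / mu + lam / mu ^ 2 - A / mu)) / a with hF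
  set g2 : ℝ → ℝ := fun x =>
    (Real.exp (-(lam * x)) - Real.exp (-(mu * x))) * (A - lam * x) / a with hg2
  have hg2cont : Continuous g2 := by fun_prop
  have hgg2 : ∀ x, g x = g2 x := by
    intro x
    have he : Real.exp (-(mu * x)) = Real.exp (-(lam * x)) * Real.exp (-(t * x)) := by
      rw [← Real.exp_add]
      congr 1
      simp only [hmu]; ring
    simp only [hg, hg2, hA, he, neg_mul]
    ring
  have hderiv : ∀ x, HasDerivAt F (g2 x) x := by
    intro x
    have h1 : HasDerivAt (fun y : ℝ => -(lam * y)) (-lam) x := by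
      simpa using ((hasDerivAt_id x).const_mul lam).fun_neg
    have h2 : HasDerivAt (fun y : ℝ => -(mu * y)) (-mu) x := by
      simpa using ((hasDerivAt_id x).const_mul mu).fun_neg
    have e1 := h1.exp
    have e2 := h2.exp
    have l1 : HasDerivAt (fun y : ℝ => lam * y / lam + lam / lam ^ 2 - A / lam)
        (lam / lam) x := by
      have : HasDerivAt (fun y : ℝ => lam * y) lam x := by
        simpa using (hasDerivAt_id x).const_mul lam
      simpa using ((this.div_const lam).add_const (lam / lam ^ 2)).sub_const (A / lam)
    have l2 : HasDerivAt (fun y : ℝ => lam * y / mu + lam / mu ^ 2 - A / mu)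
        (lam / mu) x := by
      have : HasDerivAt (fun y : ℝ => lam * y) lam x := by
        simpa using (hasDerivAt_id x).const_mul lam
      simpa using ((this.div_const mu).add_const (lam / mu ^ 2)).sub_const (A / mu)
    have p1 := e1.mul l1
    have p2 := e2.mul l2
    have p3 := (p1.sub p2).div_const a
    refine p3.congr_deriv ?_
    simp only [hg2]
    field_simp
    ring
  have hint : ∫ x in (0:ℝ)..a, g2 x = F a - F 0 :=
    intervalIntegral.integral_eq_sub_of_hasDerivAt (fun x _ => hderiv x)
      (hg2cont.intervalIntegrable _ _)
  have hstep7 : ∫ x in Ioo 0 a, g x = F a - F 0 := by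
    have : ∫ x in Ioo 0 a, g x = ∫ x in Ioo 0 a, g2 x := by
      apply setIntegral_congr_fun measurableSet_Ioo
      intro x _
      exact hgg2 x
    rw [this, ← integral_Ioc_eq_integral_Ioo, ← intervalIntegral.integral_of_le ha.le, hint]
  -- final algebra
  have hfinal : F a - F 0
      = t / mu - t / (a * mu ^ 2) * (1 - Real.exp (-a * mu)) := by
    have hE : Real.exp (-a * mu) = Real.exp (-(mu * a)) := by ring_nf
    simp only [hF, hA, hE, mul_zero, neg_zero, Real.exp_zero, one_mul, zero_div, zero_add]
    field_simp
    ring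
  rw [hstep1, hstep2, hstep3, hstep4, hstep5, hstep6, hstep7, hfinal]
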